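/- The greedy construction of the left-most good branch is correct: define β recursively starting at the root by, at each node v, descending to the left child if some good branch of t passes through the left child of v, and otherwise to the right child. If t has at least one good branch, then the branch β so constructed is itself a good branch of t, and no good branch of t lies strictly to its left. -/
import Mathlib


open Classical

/-- Infinite binary trees over {a,b}; `true` = a, `false` = b. -/
abbrev Tree2 := List (Fin 2) → Bool

/-- The length-`n` prefix of a branch. -/
def pre (β : ℕ → Fin 2) (n : ℕ) : List (Fin 2) := List.ofFn (fun i : Fin n => β i)

/-- A branch is good: all its finite prefixes are labelled `a` and it turns left (0)
infinitely often. -/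
def Good (t : Tree2) (β : ℕ → Fin 2) : Prop :=
  (∀ n, t (pre β n) = true) ∧ (∀ m, ∃ n ≥ m, β n = 0)

/-- `β` is strictly to the left of `γ`. -/
def LeftOf (β γ : ℕ → Fin 2) : Prop :=
  ∃ n, (∀ i < n, β i = γ i) ∧ β n = 0 ∧ γ n = 1

/-- A branch passes through a node. -/
def Through (γ : ℕ → Fin 2) (v : List (Fin 2)) : Prop := pre γ v.length = v
/-- The greedy prefix: descend left iff some good branch passes through the left child. -/
noncomputable def greedyPre (t : Tree2) : ℕ → List (Fin 2)
  | 0 => []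
  | n + 1 => greedyPre t n ++
      [if ∃ γ, Good t γ ∧ Through γ (greedyPre t n ++ [(0 : Fin 2)]) then (0 : Fin 2) else 1]

/-- The greedily constructed branch. -/
noncomputable def greedy (t : Tree2) (n : ℕ) : Fin 2 :=
  if ∃ γ, Good t γ ∧ Through γ (greedyPre t n ++ [(0 : Fin 2)]) then 0 else 1

lemma pre_succ (β : ℕ → Fin 2) (n : ℕ) : pre β (n+1) = pre β n ++ [β n] := by
  rw [pre, pre, List.ofFn_succ']
  simp [List.concat_eq_append]

lemma pre_length (β : ℕ → Fin 2) (n : ℕ) : (pre β n).length = n := by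
  simp [pre]

lemma greedyPre_eq (t : Tree2) (n : ℕ) : greedyPre t n = pre (greedy t) n := by
  induction n with
  | zero => simp [greedyPre, pre]
  | succ n ih =>
    rw [pre_succ, greedyPre, ih, greedy, ← ih]

lemma greedyPre_length (t : Tree2) (n : ℕ) : (greedyPre t n).length = n := by
  rw [greedyPre_eq, pre_length]

lemma through_step (γ : ℕ → Fin 2) (v : List (Fin 2)) (hv : Through γ v) :
    Through γ (v ++ [γ v.length]) := by
  unfold Through at *
  simp only [List.length_append, List.length_singleton]
  rw [pre_succ, hv]

lemma greedy_invariant (t : Tree2) (h : ∃ γ, Good t γ) (n : ℕ) :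
    ∃ γ, Good t γ ∧ Through γ (greedyPre t n) := by
  induction n with
  | zero =>
    obtain ⟨γ, hγ⟩ := h
    exact ⟨γ, hγ, by simp [Through, pre, greedyPre]⟩
  | succ n ih =>
    obtain ⟨γ, hγ, hth⟩ := ih
    by_cases hc : ∃ γ, Good t γ ∧ Through γ (greedyPre t n ++ [(0 : Fin 2)])
    · obtain ⟨δ, hδ, hδt⟩ := id hc
      refine ⟨δ, hδ, ?_⟩
      rw [greedyPre, if_pos hc]
      exact hδt
    · have hstep := through_step γ _ hth
      rw [greedyPre_length] at hstep
      have h01 : γ n = 0 ∨ γ n = 1 := by omega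
      rcases h01 with h0 | h1
      · exact absurd ⟨γ, hγ, h0 ▸ hstep⟩ hc
      · refine ⟨γ, hγ, ?_⟩
        rw [greedyPre, if_neg hc]
        rwa [h1] at hstep

/-- The greedy construction is correct: if `t` has a good branch then the greedily
constructed branch is good, and no good branch lies strictly to its left. -/
theorem greedy_is_leftmost_good (t : Tree2) (h : ∃ γ, Good t γ) :
    Good t (greedy t) ∧ ∀ γ, Good t γ → ¬ LeftOf γ (greedy t) := by
  have key : ∀ n, ∃ γ, Good t γ ∧ Through γ (greedyPre t n) := greedy_invariant t h
  have hleft : ∀ γ, Good t γ → ¬ LeftOf γ (greedy t) := by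
    rintro γ hγ ⟨n, hpre, h0, h1⟩
    have hth : Through γ (greedyPre t n ++ [(0 : Fin 2)]) := by
      have hpren : pre γ n = pre (greedy t) n := by
        unfold pre
        congr 1
        funext i
        exact hpre i i.isLt
      have hthn : Through γ (greedyPre t n) := by
        rw [Through, greedyPre_length, greedyPre_eq, ← hpren]
      have := through_step γ _ hthn
      rw [greedyPre_length, h0] at this
      exact this
    have : greedy t n = 0 := by
      rw [greedy, if_pos ⟨γ, hγ, hth⟩]
    rw [this] at h1
    exact absurd h1 (by decide)
  refine ⟨⟨?_, ?_⟩, hleft⟩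
  · intro n
    obtain ⟨γ, hγ, hth⟩ := key n
    rw [Through, greedyPre_length, greedyPre_eq] at hth
    rw [← hth]
    exact hγ.1 n
  · intro m
    by_contra hcon
    push_neg at hcon
    obtain ⟨γ, hγ, hth⟩ := key m
    have hall : ∀ k, Through γ (greedyPre t (m + k)) ∧ γ (m + k) = 1 := by
      intro k
      induction k with
      | zero =>
        refine ⟨hth, ?_⟩
        have h1 : greedy t m = 1 := by
          have := hcon m (le_refl m)
          omega
        rw [greedy] at h1
        by_cases hc : ∃ δ, Good t δ ∧ Through δ (greedyPre t m ++ [(0 : Fin 2)])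
        · simp [hc] at h1
        · have hstep := through_step γ _ hth
          rw [greedyPre_length] at hstep
          have h01 : γ m = 0 ∨ γ m = 1 := by omega
          rcases h01 with h0 | hone
          · exact absurd ⟨γ, hγ, h0 ▸ hstep⟩ hc
          · simpa using hone
      | succ k ihk =>
        obtain ⟨ihth, ihone⟩ := ihk
        have hstep := through_step γ _ ihth
        rw [greedyPre_length, ihone] at hstep
        have hthsucc : Through γ (greedyPre t (m + k + 1)) := by
          rw [greedyPre]
          by_cases hc : ∃ δ, Good t δ ∧ Through δ (greedyPre t (m + k) ++ [(0 : Fin 2)])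
          · -- then greedy t (m+k) = 0, contradicting hcon
            exfalso
            have h0 : greedy t (m + k) = 0 := by rw [greedy, if_pos hc]
            have := hcon (m + k) (Nat.le_add_right m k)
            rw [h0] at this
            exact this rfl
          · simpa [hc] using hstep
        refine ⟨hthsucc, ?_⟩
        have h1 : greedy t (m + (k+1)) = 1 := by
          have := hcon (m + (k+1)) (Nat.le_add_right _ _)
          omega
        rw [greedy] at h1
        by_cases hc : ∃ δ, Good t δ ∧ Through δ (greedyPre t (m + (k+1)) ++ [(0 : Fin 2)])
        · simp [hc] at h1
        · have hth' : Through γ (greedyPre t (m + (k+1))) := hthsucc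
          have hstep' := through_step γ _ hth'
          rw [greedyPre_length] at hstep'
          have h01 : γ (m + (k+1)) = 0 ∨ γ (m + (k+1)) = 1 := by omega
          rcases h01 with h0 | hone
          · exact absurd ⟨γ, hγ, h0 ▸ hstep'⟩ hc
          · exact hone
    obtain ⟨n, hn, hn0⟩ := hγ.2 m
    have := (hall (n - m)).2
    rw [Nat.add_sub_cancel' hn] at this
    rw [hn0] at this
    exact absurd this (by decide)
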